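/- For any bounded meet-semilattice A, the map θ sending a ∈ A to the set of proper nonempty filters containing a is an injective bounded-semilattice homomorphism from A into the semilattice of clopen filters of the filter space of A, and every clopen filter of this space equals θ(a) for some a ∈ A. -/

import Mathlib

/-- A filter of a meet-semilattice: an upward-closed subset closed under binary
meets. -/
def IsFilt {X : Type*} [SemilatticeInf X] (s : Set X) : Prop :=
  (∀ x y : X, x ∈ s → x ≤ y → y ∈ s) ∧ ∀ x y : X, x ∈ s → y ∈ s → x ⊓ y ∈ s

variable (A : Type*) [SemilatticeInf A] [BoundedOrder A]

/-- The points of the dual space of a bounded meet-semilattice `A`: the proper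
nonempty filters of `A`. -/
def Pt : Type _ := {x : Set A // IsFilt x ∧ x.Nonempty ∧ ⊥ ∉ x}

/-- The basic sets `θ a = {x : a ∈ x}`. -/
def theta (a : A) : Set (Pt A) := {x : Pt A | a ∈ x.1}

/-- The Stone-type topology on the space of proper nonempty filters of `A`. -/
def ptTop : TopologicalSpace (Pt A) :=
  TopologicalSpace.generateFrom
    ({s | ∃ a : A, s = theta A a} ∪ {s | ∃ a : A, s = (theta A a)ᶜ})

/-- A filter of the dual space, whose points are ordered by inclusion and whose
meets are intersections: a set of points upward-closed under inclusion and
closed under (pointwise) intersection. -/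
def IsFiltPt (F : Set (Pt A)) : Prop :=
  (∀ x y : Pt A, x ∈ F → x.1 ⊆ y.1 → y ∈ F) ∧
  (∀ x y : Pt A, x ∈ F → y ∈ F → ∀ z : Pt A, z.1 = x.1 ∩ y.1 → z ∈ F)

namespace ThetaAux

variable {A}

/-- The subbasis. -/
def SB : Set (Set (Pt A)) :=
  {s | ∃ a : A, s = theta A a} ∪ {s | ∃ a : A, s = (theta A a)ᶜ}

lemma top_mem_pt (x : Pt A) : (⊤ : A) ∈ x.1 := by
  obtain ⟨hf, ⟨c, hc⟩, _⟩ := x.2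
  exact hf.1 c ⊤ hc le_top

/-- The intersection of two points, as a point. -/
def ptInter (x y : Pt A) : Pt A :=
  ⟨x.1 ∩ y.1,
   ⟨⟨fun u v hu huv => ⟨x.2.1.1 u v hu.1 huv, y.2.1.1 u v hu.2 huv⟩,
     fun u v hu hv => ⟨x.2.1.2 u v hu.1 hv.1, y.2.1.2 u v hu.2 hv.2⟩⟩,
    ⟨⊤, top_mem_pt x, top_mem_pt y⟩,
    fun h => x.2.2.2 h.1⟩⟩

/-- The principal filter of a nonzero element, as a point. -/
def prin (a : A) (ha : a ≠ ⊥) : Pt A :=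
  ⟨Set.Ici a,
   ⟨⟨fun u v hu huv => le_trans hu huv,
     fun u v hu hv => le_inf hu hv⟩,
    ⟨a, le_refl a⟩,
    fun h => ha (le_bot_iff.mp h)⟩⟩

/-- A filter of points is closed under intersections of finite families. -/
lemma inter_closed {F : Set (Pt A)} (hF : IsFiltPt A F) (S : Set (Pt A)) (hS : S.Finite) :
    S ⊆ F → ∀ x₀ : Pt A, x₀ ∈ F →
      ∃ w : Pt A, w ∈ F ∧ w.1 = x₀.1 ∩ ⋂ x ∈ S, x.1 := by
  refine Set.Finite.induction_on S hS ?_ ?_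
  · intro _ x₀ hx₀
    exact ⟨x₀, hx₀, by simp⟩
  · intro a s _ _ ih hsub x₀ hx₀
    have haF : a ∈ F := hsub (Set.mem_insert a s)
    have hInt : ptInter x₀ a ∈ F := hF.2 x₀ a hx₀ haF (ptInter x₀ a) rfl
    obtain ⟨w, hwF, hw⟩ := ih (fun y hy => hsub (Set.mem_insert_of_mem a hy)) (ptInter x₀ a) hInt
    refine ⟨w, hwF, ?_⟩
    rw [hw, Set.biInter_insert, ← Set.inter_assoc]
    rfl

lemma meet_lemma (z : Pt A) (f : Set (Set (Pt A))) (hf : f.Finite) :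
    f ⊆ SB (A := A) → z ∈ ⋂₀ f →
      ∃ a : A, a ∈ z.1 ∧ ∀ x : Pt A, a ∈ x.1 → ptInter x z ∈ ⋂₀ f := by
  refine Set.Finite.induction_on f hf ?_ ?_
  · intro _ _
    exact ⟨⊤, top_mem_pt z, fun x _ => by simp⟩
  · intro s f _ _ ih hsub hz
    rw [Set.sInter_insert] at hz
    obtain ⟨a, haz, ha⟩ := ih (fun t ht => hsub (Set.mem_insert_of_mem s ht)) hz.2
    rcases hsub (Set.mem_insert s f) with ⟨c, rfl⟩ | ⟨b, rfl⟩
    · -- s = theta c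
      have hcz : c ∈ z.1 := hz.1
      refine ⟨a ⊓ c, z.2.1.2 a c haz hcz, fun x hx => ?_⟩
      have hax : a ∈ x.1 := x.2.1.1 _ _ hx inf_le_left
      have hcx : c ∈ x.1 := x.2.1.1 _ _ hx inf_le_right
      rw [Set.sInter_insert]
      exact ⟨⟨hcx, hcz⟩, ha x hax⟩
    · -- s = (theta b)ᶜ
      have hbz : b ∉ z.1 := hz.1
      refine ⟨a, haz, fun x hx => ?_⟩
      rw [Set.sInter_insert]
      exact ⟨fun h => hbz h.2, ha x hx⟩

end ThetaAux

open ThetaAux in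
/-- The map `θ` is an injective bounded-semilattice homomorphism from `A` into
the semilattice of clopen filters of the dual space of `A`, and every clopen
filter of that space is of the form `θ a`. -/
theorem theta_iso_onto_clopen_filters :
    Function.Injective (theta A) ∧
    (∀ a b : A, theta A (a ⊓ b) = theta A a ∩ theta A b) ∧
    theta A (⊤ : A) = Set.univ ∧
    theta A (⊥ : A) = ∅ ∧
    (∀ a : A, @IsClopen _ (ptTop A) (theta A a) ∧ IsFiltPt A (theta A a)) ∧
    (∀ F : Set (Pt A), @IsClopen _ (ptTop A) F → IsFiltPt A F →
      ∃ a : A, F = theta A a) := by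
  letI := ptTop A
  have hbot : theta A (⊥ : A) = ∅ := by
    ext x
    simp only [theta, Set.mem_setOf_eq, Set.mem_empty_iff_false, iff_false]
    exact x.2.2.2
  refine ⟨?_, ?_, ?_, hbot, ?_, ?_⟩
  · -- injectivity
    intro a b h
    by_cases ha : a = ⊥
    · by_cases hb : b = ⊥
      · rw [ha, hb]
      · exfalso
        have : prin b hb ∈ theta A b := le_refl b
        rw [← h] at this
        subst ha
        exact (prin b hb).2.2.2 this
    · by_cases hb : b = ⊥
      · exfalso
        have : prin a ha ∈ theta A a := le_refl a
        rw [h] at this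
        subst hb
        exact (prin a ha).2.2.2 this
      · have h1 : prin a ha ∈ theta A a := le_refl a
        rw [h] at h1
        have h2 : prin b hb ∈ theta A b := le_refl b
        rw [← h] at h2
        exact le_antisymm h1 h2
  · -- meets
    intro a b
    ext x
    constructor
    · intro hx
      exact ⟨x.2.1.1 _ _ hx inf_le_left, x.2.1.1 _ _ hx inf_le_right⟩
    · intro hx
      exact x.2.1.2 a b hx.1 hx.2
  · -- top
    ext x
    simp only [theta, Set.mem_setOf_eq, Set.mem_univ, iff_true]
    exact top_mem_pt x
  · -- clopen filters
    intro a
    refine ⟨⟨⟨?_⟩, ?_⟩, ?_, ?_⟩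
    · exact TopologicalSpace.GenerateOpen.basic _ (Or.inr ⟨a, rfl⟩)
    · exact TopologicalSpace.GenerateOpen.basic _ (Or.inl ⟨a, rfl⟩)
    · exact fun x y hx hxy => hxy hx
    · intro x y hx hy z hz
      show a ∈ z.1
      rw [hz]
      exact ⟨hx, hy⟩
  · -- surjectivity onto clopen filters
    intro F hclopen hfilt
    rcases F.eq_empty_or_nonempty with hFe | ⟨x₀, hx₀⟩
    · exact ⟨⊥, hFe.trans hbot.symm⟩
    have hbasis := TopologicalSpace.isTopologicalBasis_of_subbasis
      (rfl : (ptTop A) = TopologicalSpace.generateFrom (SB (A := A)))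
    -- the intersection of all points of F, as a point
    have hzpt : IsFilt (⋂ x ∈ F, x.1) ∧ (⋂ x ∈ F, x.1).Nonempty ∧ ⊥ ∉ ⋂ x ∈ F, x.1 := by
      refine ⟨⟨?_, ?_⟩, ⟨⊤, ?_⟩, ?_⟩
      · intro u v hu huv
        rw [Set.mem_iInter₂] at hu ⊢
        exact fun x hx => x.2.1.1 u v (hu x hx) huv
      · intro u v hu hv
        rw [Set.mem_iInter₂] at hu hv ⊢
        exact fun x hx => x.2.1.2 u v (hu x hx) (hv x hx)
      · rw [Set.mem_iInter₂]
        exact fun x _ => top_mem_pt x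
      · intro h
        rw [Set.mem_iInter₂] at h
        exact x₀.2.2.2 (h x₀ hx₀)
    set z : Pt A := ⟨⋂ x ∈ F, x.1, hzpt⟩ with hzdef
    have hzmem : ∀ c : A, c ∈ z.1 ↔ ∀ x ∈ F, c ∈ x.1 := fun c => Set.mem_iInter₂
    -- Step B: z ∈ F
    have hzF : z ∈ F := by
      by_contra hz
      obtain ⟨v, ⟨f, ⟨hfin, hfsub⟩, rfl⟩, hzv, hvF⟩ :=
        hbasis.exists_subset_of_mem_open (show z ∈ Fᶜ from hz) hclopen.1.isOpen_compl
      -- choose witnesses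
      have hchoice : ∀ s : Set (Pt A), ∃ x : Pt A, s ∈ f →
          x ∈ F ∧ ∀ y : Pt A, y.1 ⊆ x.1 → z.1 ⊆ y.1 → y ∈ s := by
        intro s
        by_cases hs : s ∈ f
        · rcases hfsub hs with ⟨a, rfl⟩ | ⟨b, rfl⟩
          · have haz : a ∈ z.1 := hzv _ hs
            exact ⟨x₀, fun _ => ⟨hx₀, fun y _ hzy => hzy haz⟩⟩
          · have hbz : b ∉ z.1 := hzv _ hs
            have : ∃ x ∈ F, b ∉ x.1 := by
              by_contra hcon
              push_neg at hcon
              exact hbz ((hzmem b).mpr hcon)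
            obtain ⟨x, hxF, hbx⟩ := this
            exact ⟨x, fun _ => ⟨hxF, fun y hyx _ hby => hbx (hyx hby)⟩⟩
        · exact ⟨x₀, fun h => absurd h hs⟩
      choose g hg using hchoice
      obtain ⟨w, hwF, hw⟩ := inter_closed hfilt (g '' f) (hfin.image g)
        (fun y ⟨s, hs, hys⟩ => hys ▸ (hg s hs).1) x₀ hx₀
      have hwf : w ∈ ⋂₀ f := by
        intro s hs
        refine (hg s hs).2 w ?_ ?_
        · rw [hw]
          intro c hc
          exact (Set.mem_iInter₂.mp hc.2) (g s) ⟨s, hs, rfl⟩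
        · intro c hc
          rw [hw]
          refine ⟨(hzmem c).mp hc x₀ hx₀, Set.mem_iInter₂.mpr ?_⟩
          rintro x ⟨s, hs, rfl⟩
          exact (hzmem c).mp hc (g s) (hg s hs).1
      exact hvF hwf hwF
    -- Step C: use openness at z to find a
    obtain ⟨v, ⟨f, ⟨hfin, hfsub⟩, rfl⟩, hzv, hvF⟩ :=
      hbasis.exists_subset_of_mem_open hzF hclopen.2
    obtain ⟨a, haz, ha⟩ := meet_lemma z f hfin hfsub hzv
    refine ⟨a, ?_⟩
    ext x
    constructor
    · intro hx
      exact (hzmem a).mp haz x hx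
    · intro hx
      have hx' : ptInter x z ∈ F := hvF (ha x hx)
      exact hfilt.1 (ptInter x z) x hx' Set.inter_subset_left
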